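/- Two locally finite games G and H are equivalent if and only if 𝒢(G) = 𝒢(H), i.e. either both have finite rank with the same Sprague-Grundy value in ℕ, or both have infinite rank with extended values ∞(𝒜) and ∞(ℬ) where 𝒜 = ℬ. -/
import Mathlib


open scoped Classical

universe u

/-- `PosP Γ n` is the set `Pₙ` of positions from which the second player can win
within `n` rounds: `P₀` is the set of terminal positions, and
`Pₙ₊₁ = {x : every option of x has an option in Pₙ}`. -/
def PosP {V : Type*} (Γ : V → Finset V) : ℕ → Set V
  | 0 => {x | Γ x = ∅}
  | n + 1 => {x | ∀ y ∈ Γ x, ∃ z ∈ Γ y, z ∈ PosP Γ n}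

/-- `PosN Γ n` is the set `Nₙ`: for `n ≥ 1`, `Nₙ = {x : some option of x lies in Pₙ₋₁}`. -/
def PosN {V : Type*} (Γ : V → Finset V) : ℕ → Set V
  | 0 => ∅
  | n + 1 => {x | ∃ y ∈ Γ x, y ∈ PosP Γ n}

/-- The P-positions `𝒫 = ⋃ₙ Pₙ` (second player wins). -/
def PPos {V : Type*} (Γ : V → Finset V) : Set V := ⋃ n, PosP Γ n

/-- The N-positions `𝒩 = ⋃ₙ Nₙ` (first player wins). -/
def NPos {V : Type*} (Γ : V → Finset V) : Set V := ⋃ n, PosN Γ n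

/-- The D-positions `𝒟 = V ∖ (𝒫 ∪ 𝒩)` (draws). -/
def DPos {V : Type*} (Γ : V → Finset V) : Set V := (PPos Γ ∪ NPos Γ)ᶜ

/-- The mex (least natural number not attained) of the values `g y`, `y ∈ s`. -/
noncomputable def mexF {V : Type*} (s : Finset V) (g : V → ℕ∞) : ℕ :=
  sInf {n : ℕ | ∀ y ∈ s, g y ≠ (n : ℕ∞)}

/-- The approximants `𝒢ₙ` of the extended Sprague-Grundy function. -/
noncomputable def Gfun {V : Type*} (Γ : V → Finset V) : ℕ → V → ℕ∞
  | 0 => fun x => if Γ x = ∅ then 0 else ⊤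
  | n + 1 => fun x =>
      let m := mexF (Γ x) (Gfun Γ n)
      if ∀ y ∈ Γ x, Gfun Γ n y ≤ (m : ℕ∞) ∨ ∃ z ∈ Γ y, Gfun Γ n z = (m : ℕ∞)
      then (m : ℕ∞) else ⊤

/-- `x` has finite rank with (finite) Sprague-Grundy value `m`:
`𝒢ₙ(x) = m` for all sufficiently large `n`. -/
def HasGVal {V : Type*} (Γ : V → Finset V) (x : V) (m : ℕ) : Prop :=
  ∃ n₀ : ℕ, ∀ n ≥ n₀, Gfun Γ n x = (m : ℕ∞)

/-- `x` has infinite rank: `𝒢ₙ(x) = ∞` for all `n`. -/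
def InfiniteRank {V : Type*} (Γ : V → Finset V) (x : V) : Prop :=
  ∀ n : ℕ, Gfun Γ n x = ⊤

/-- The rank of `x`: the least `n` with `𝒢ₙ(x) < ∞`, or `∞` if there is none. -/
noncomputable def rank {V : Type*} (Γ : V → Finset V) (x : V) : ℕ∞ :=
  sInf ((↑) '' {n : ℕ | Gfun Γ n x ≠ ⊤})

/-- For `x` of infinite rank, the set `𝒜` with `𝒢(x) = ∞(𝒜)`:
the set of finite Sprague-Grundy values of finite-rank options of `x`. -/
def ValSet {V : Type*} (Γ : V → Finset V) (x : V) : Set ℕ :=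
  {a | ∃ y ∈ Γ x, HasGVal Γ y a}

/-- The graph of the disjunctive sum: move in exactly one coordinate. -/
noncomputable def sumGraph {V W : Type*} (Γ : V → Finset V) (Δ : W → Finset W) :
    V × W → Finset (V × W) := fun p =>
  (Γ p.1).image (fun u => (u, p.2)) ∪ (Δ p.2).image (fun w => (p.1, w))

/-- Two (positions of possibly different) games lie in the same outcome class. -/
def SameOutcome {V W : Type*} (Γ : V → Finset V) (x : V) (Δ : W → Finset W) (y : W) : Prop :=
  (x ∈ PPos Γ ↔ y ∈ PPos Δ) ∧ (x ∈ NPos Γ ↔ y ∈ NPos Δ) ∧ (x ∈ DPos Γ ↔ y ∈ DPos Δ)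

/-- Equivalence of games: `G + X` and `H + X` have the same outcome for every
locally finite game `X`. -/
def GameEquiv {V W : Type*} (Γ : V → Finset V) (x : V) (Δ : W → Finset W) (y : W) : Prop :=
  ∀ (X : Type u) (Ξ : X → Finset X) (z : X),
    SameOutcome (sumGraph Γ Ξ) (x, z) (sumGraph Δ Ξ) (y, z)

/-- The nim heap `*m`: positions `0, …, m`, where from `k` one can move to any `j < k`. -/
def nimGraph (m : ℕ) : Fin (m + 1) → Finset (Fin (m + 1)) :=
  fun k => Finset.univ.filter (fun j => j < k)

/-- The reduced graph `R(V)`: the induced graph on the complement of the P-positions. -/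
noncomputable def reducedGraph {V : Type*} (Γ : V → Finset V) :
    {x : V // x ∉ PPos Γ} → Finset {x : V // x ∉ PPos Γ} := fun x =>
  (Γ x.1).subtype (fun y => y ∉ PPos Γ)

/-- The vertex set of `R^{(k)}(V)`: positions which do not have finite rank with
Sprague-Grundy value `< k`. -/
def RkSet {V : Type*} (Γ : V → Finset V) (k : ℕ) : Set V :=
  {x | ¬ ∃ m < k, HasGVal Γ x m}

/-- The induced game graph `R^{(k)}(V)` on `RkSet Γ k`. -/
noncomputable def RkGraph {V : Type*} (Γ : V → Finset V) (k : ℕ) :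
    RkSet Γ k → Finset (RkSet Γ k) := fun x =>
  (Γ x.1).subtype (fun y => y ∈ RkSet Γ k)

/-- `V` is `k`-stable: every infinite-rank position `x`, with `𝒢(x) = ∞(𝒜)`,
has `{0, 1, …, k} ⊆ 𝒜`. -/
def kStable {V : Type*} (Γ : V → Finset V) (k : ℕ) : Prop :=
  ∀ x, InfiniteRank Γ x → ∀ j ≤ k, j ∈ ValSet Γ x

/-- `l` is a directed walk from `o` to `x` in the graph `Γ`. -/
def IsWalk {V : Type*} (Γ : V → Finset V) (o x : V) (l : List V) : Prop :=
  l.head? = some o ∧ l.getLast? = some x ∧ l.Chain' (fun a b => b ∈ Γ a)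

/-- `Γ` is a tree with root `o`: `o` has no incoming arcs, and every vertex is
reached from `o` by a unique directed walk. -/
def IsTree {V : Type*} (Γ : V → Finset V) (o : V) : Prop :=
  (∀ x, o ∉ Γ x) ∧ ∀ x, ∃! l : List V, IsWalk Γ o x l

/-- `f` is a mex labelling: `f x` is the least natural number not attained by `f`
on the options of `x`, for every `x`. -/
def MexLabelling {V : Type*} (Γ : V → Finset V) (f : V → ℕ) : Prop :=
  ∀ x, f x = sInf {n : ℕ | ∀ y ∈ Γ x, f y ≠ n}

section Basic

variable {V : Type*} (Γ : V → Finset V)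

/-- Finite rank. -/
def FinRank (x : V) : Prop := ∃ n, Gfun Γ n x ≠ ⊤

/-- A stage at which the value stabilizes. -/
noncomputable def stg (x : V) : ℕ := sInf {n | Gfun Γ n x ≠ ⊤}

/-- The stable value. -/
noncomputable def gv (x : V) : ℕ := (Gfun Γ (stg Γ x) x).toNat

variable {Γ}

lemma enat_exists_coe {g : ℕ∞} (h : g ≠ ⊤) : ∃ a : ℕ, g = (a : ℕ∞) := by
  lift g to ℕ using h; exact ⟨g, rfl⟩

lemma mexF_spec (s : Finset V) (g : V → ℕ∞) :
    (∀ y ∈ s, g y ≠ (mexF s g : ℕ∞)) ∧ (∀ t < mexF s g, ∃ y ∈ s, g y = (t : ℕ∞)) := by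
  have hne : {n : ℕ | ∀ y ∈ s, g y ≠ (n : ℕ∞)}.Nonempty := by
    refine ⟨(s.sup fun y => (g y).toNat) + 1, fun y hy hgy => ?_⟩
    have h2 : (g y).toNat ≤ s.sup fun y => (g y).toNat :=
      Finset.le_sup (f := fun y => (g y).toNat) hy
    have h3 : (g y).toNat = (s.sup fun y => (g y).toNat) + 1 := by
      rw [hgy, ENat.toNat_coe]
    omega
  constructor
  · exact Nat.sInf_mem hne
  · intro t ht
    by_contra hc
    push_neg at hc
    have : mexF s g ≤ t := Nat.sInf_le (fun y hy => hc y hy)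
    omega

lemma mexF_notMem (s : Finset V) (g : V → ℕ∞) {y : V} (hy : y ∈ s) :
    g y ≠ (mexF s g : ℕ∞) := (mexF_spec s g).1 y hy

lemma mexF_exists_lt (s : Finset V) (g : V → ℕ∞) {t : ℕ} (ht : t < mexF s g) :
    ∃ y ∈ s, g y = (t : ℕ∞) := (mexF_spec s g).2 t ht

lemma gfun_zero (x : V) : Gfun Γ 0 x = if Γ x = ∅ then 0 else ⊤ := rfl

lemma gfun_succ (n : ℕ) (x : V) :
    Gfun Γ (n+1) x =
      if ∀ y ∈ Γ x, Gfun Γ n y ≤ (mexF (Γ x) (Gfun Γ n) : ℕ∞) ∨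
          ∃ z ∈ Γ y, Gfun Γ n z = (mexF (Γ x) (Gfun Γ n) : ℕ∞)
      then (mexF (Γ x) (Gfun Γ n) : ℕ∞) else ⊤ := rfl

lemma gfun_succ_eq_coe {n : ℕ} {x : V} {a : ℕ} (h : Gfun Γ (n+1) x = (a : ℕ∞)) :
    a = mexF (Γ x) (Gfun Γ n) ∧
      ∀ y ∈ Γ x, Gfun Γ n y ≤ (a : ℕ∞) ∨ ∃ z ∈ Γ y, Gfun Γ n z = (a : ℕ∞) := by
  rw [gfun_succ] at h
  split_ifs at h with hc
  · have : a = mexF (Γ x) (Gfun Γ n) := by exact_mod_cast h.symm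
    exact ⟨this, this ▸ hc⟩
  · exact absurd h.symm (by simp)

/-- Stabilization: a finite value persists. -/
lemma gfun_stab : ∀ n, ∀ x : V, Gfun Γ n x ≠ ⊤ → Gfun Γ (n+1) x = Gfun Γ n x := by
  intro n
  induction n with
  | zero =>
    intro x h
    rw [gfun_zero] at h
    by_cases ht : Γ x = ∅
    · have hm : mexF (Γ x) (Gfun Γ 0) = 0 := by
        refine le_antisymm (Nat.sInf_le ?_) (Nat.zero_le _)
        intro y hy; rw [ht] at hy; exact absurd hy (Finset.notMem_empty y)
      rw [gfun_zero, if_pos ht, gfun_succ, hm, ht]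
      simp
    · rw [if_neg ht] at h; exact absurd rfl h
  | succ n ih =>
    intro x h
    obtain ⟨a, ha⟩ := enat_exists_coe h
    obtain ⟨hma, hcond⟩ := gfun_succ_eq_coe ha
    -- no option attains a at stage n+1
    have hmem : ∀ y ∈ Γ x, Gfun Γ (n+1) y ≠ (a : ℕ∞) := by
      intro y hy hval
      by_cases hyt : Gfun Γ n y = ⊤
      · obtain ⟨hma', hcond'⟩ := gfun_succ_eq_coe hval
        rcases hcond y hy with h1 | ⟨z, hz, hz2⟩
        · rw [hyt] at h1; exact absurd h1 (by simp)
        · exact mexF_notMem (Γ y) (Gfun Γ n) hz (by rw [hz2, hma'])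
      · rw [ih y hyt] at hval
        exact mexF_notMem (Γ x) (Gfun Γ n) hy (by rw [hval, hma])
    have hmex : mexF (Γ x) (Gfun Γ (n+1)) = a := by
      have hle : mexF (Γ x) (Gfun Γ (n+1)) ≤ a := Nat.sInf_le hmem
      rcases lt_or_eq_of_le hle with hlt | heq
      · exfalso
        obtain ⟨y, hy, hval⟩ := mexF_exists_lt (Γ x) (Gfun Γ n) (hma ▸ hlt)
        have hyn : Gfun Γ n y ≠ ⊤ := by rw [hval]; simp
        exact mexF_notMem (Γ x) (Gfun Γ (n+1)) hy (by rw [ih y hyn, hval])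
      · exact heq
    have hcond2 : ∀ y ∈ Γ x, Gfun Γ (n+1) y ≤ (a : ℕ∞) ∨
        ∃ z ∈ Γ y, Gfun Γ (n+1) z = (a : ℕ∞) := by
      intro y hy
      rcases hcond y hy with h1 | ⟨z, hz, hz2⟩
      · left
        have hyn : Gfun Γ n y ≠ ⊤ := fun htop => by rw [htop] at h1; exact absurd h1 (by simp)
        rw [ih y hyn]; exact h1
      · exact Or.inr ⟨z, hz, by rw [ih z (by rw [hz2]; simp), hz2]⟩
    rw [ha, gfun_succ, hmex, if_pos (hcond2)]

lemma gfun_stab_ge {n m : ℕ} {x : V} (h : Gfun Γ n x ≠ ⊤) (hnm : n ≤ m) :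
    Gfun Γ m x = Gfun Γ n x := by
  induction m with
  | zero => cases Nat.le_zero.mp hnm; rfl
  | succ m ih =>
    rcases Nat.lt_or_ge n (m+1) with hlt | hge
    · have hm : n ≤ m := Nat.lt_succ_iff.mp hlt
      rw [gfun_stab m x (by rw [ih hm]; exact h), ih hm]
    · cases le_antisymm hnm hge; rfl

end Basic
section Values

variable {V : Type*} {Γ : V → Finset V}

lemma finrank_stg (h : FinRank Γ x) : Gfun Γ (stg Γ x) x ≠ ⊤ :=
  Nat.sInf_mem h

lemma gfun_val_at (h : FinRank Γ x) {n : ℕ} (hn : stg Γ x ≤ n) :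
    Gfun Γ n x = (gv Γ x : ℕ∞) := by
  rw [gfun_stab_ge (finrank_stg h) hn, gv, ENat.coe_toNat (finrank_stg h)]

lemma finrank_of_stage {n : ℕ} {x : V} {t : ℕ} (h : Gfun Γ n x = (t : ℕ∞)) :
    FinRank Γ x ∧ stg Γ x ≤ n ∧ gv Γ x = t := by
  have hne : Gfun Γ n x ≠ ⊤ := by rw [h]; simp
  have hfr : FinRank Γ x := ⟨n, hne⟩
  have hle : stg Γ x ≤ n := Nat.sInf_le hne
  refine ⟨hfr, hle, ?_⟩
  have := gfun_val_at hfr hle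
  rw [h] at this
  exact_mod_cast this.symm

lemma hasGVal_of_finrank (h : FinRank Γ x) : HasGVal Γ x (gv Γ x) :=
  ⟨stg Γ x, fun n hn => gfun_val_at h hn⟩

lemma hasGVal_iff {x : V} {a : ℕ} : HasGVal Γ x a ↔ FinRank Γ x ∧ gv Γ x = a := by
  constructor
  · rintro ⟨n₀, hn⟩
    exact (finrank_of_stage (hn n₀ le_rfl)).imp id (fun h => h.2)
  · rintro ⟨h, rfl⟩
    exact hasGVal_of_finrank h

lemma hasGVal_unique {x : V} {a b : ℕ} (ha : HasGVal Γ x a) (hb : HasGVal Γ x b) : a = b := by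
  rw [hasGVal_iff] at ha hb
  omega

lemma infiniteRank_iff_not_finrank {x : V} : InfiniteRank Γ x ↔ ¬ FinRank Γ x := by
  unfold InfiniteRank FinRank
  push_neg
  rfl

lemma not_hasGVal_of_infiniteRank {x : V} (h : InfiniteRank Γ x) (a : ℕ) :
    ¬ HasGVal Γ x a := by
  rw [hasGVal_iff, infiniteRank_iff_not_finrank] at *
  tauto

lemma terminal_of_stg_zero (h : FinRank Γ x) (h0 : stg Γ x = 0) : Γ x = ∅ := by
  have := finrank_stg h
  rw [h0, gfun_zero] at this
  by_contra hc
  rw [if_neg hc] at this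
  exact this rfl

lemma finrank_terminal (h : Γ x = ∅) : FinRank Γ x ∧ stg Γ x = 0 ∧ gv Γ x = 0 := by
  have h0 : Gfun Γ 0 x = ((0 : ℕ) : ℕ∞) := by rw [gfun_zero, if_pos h]; simp
  obtain ⟨h1, h2, h3⟩ := finrank_of_stage h0
  exact ⟨h1, Nat.le_zero.mp h2, h3⟩

lemma stg_pos (h : FinRank Γ x) (hne : Γ x ≠ ∅) : 1 ≤ stg Γ x := by
  rcases Nat.eq_zero_or_pos (stg Γ x) with h0 | h1
  · exact absurd (terminal_of_stg_zero h h0) hne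
  · exact h1

/-- Structure of options of a finite-rank nonterminal position, at stage `stg - 1`. -/
lemma finrank_opts (h : FinRank Γ x) (hne : Γ x ≠ ∅) :
    (∀ t < gv Γ x, ∃ y ∈ Γ x, FinRank Γ y ∧ gv Γ y = t ∧ stg Γ y ≤ stg Γ x - 1) ∧
    (∀ y ∈ Γ x, ∀ b, HasGVal Γ y b → b ≠ gv Γ x) ∧
    (∀ y ∈ Γ x, (FinRank Γ y ∧ gv Γ y < gv Γ x ∧ stg Γ y ≤ stg Γ x - 1) ∨
      (∃ z ∈ Γ y, FinRank Γ z ∧ gv Γ z = gv Γ x ∧ stg Γ z ≤ stg Γ x - 1)) := by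
  have h1 : 1 ≤ stg Γ x := stg_pos h hne
  set r := stg Γ x with hr
  have hval : Gfun Γ ((r - 1) + 1) x = (gv Γ x : ℕ∞) := by
    rw [Nat.sub_add_cancel h1]; exact gfun_val_at h le_rfl
  obtain ⟨hmex, hcond⟩ := gfun_succ_eq_coe hval
  refine ⟨?_, ?_, ?_⟩
  · intro t ht
    obtain ⟨y, hy, hvy⟩ := mexF_exists_lt (Γ x) (Gfun Γ (r-1)) (by rw [← hmex] at *; exact ht)
    obtain ⟨hf, hs, hv⟩ := finrank_of_stage hvy
    exact ⟨y, hy, hf, hv, hs⟩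
  · intro y hy b hb hba
    -- at every stage n ≥ max, the mex of x excludes its own value
    obtain ⟨hfy, hgvy⟩ := hasGVal_iff.mp hb
    set n := max (stg Γ y) (r - 1) with hn
    have hx : Gfun Γ (n+1) x = (gv Γ x : ℕ∞) := by
      apply gfun_val_at h
      omega
    obtain ⟨hmex', _⟩ := gfun_succ_eq_coe hx
    refine mexF_notMem (Γ x) (Gfun Γ n) hy ?_
    rw [gfun_val_at hfy (le_max_left _ _), ← hmex', hgvy, hba]
  · intro y hy
    rcases hcond y hy with hle | ⟨z, hz, hvz⟩
    · left
      have hnt : Gfun Γ (r-1) y ≠ ⊤ := ne_top_of_le_ne_top (by simp) hle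
      obtain ⟨b, hb⟩ := enat_exists_coe hnt
      obtain ⟨hf, hs, hv⟩ := finrank_of_stage hb
      have hble : b ≤ gv Γ x := by rw [hb] at hle; exact_mod_cast hle
      have hbne : b ≠ gv Γ x := by
        intro hcontra
        exact mexF_notMem (Γ x) (Gfun Γ (r-1)) hy (by rw [hb, hcontra, hmex])
      exact ⟨hf, by omega, hs⟩
    · right
      obtain ⟨hf, hs, hv⟩ := finrank_of_stage hvz
      exact ⟨z, hz, hf, hv, hs⟩

lemma finrank_opt_lt (h : FinRank Γ x) {t : ℕ} (ht : t < gv Γ x) :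
    ∃ y ∈ Γ x, FinRank Γ y ∧ gv Γ y = t ∧ stg Γ y ≤ stg Γ x - 1 := by
  have hne : Γ x ≠ ∅ := by
    intro hc
    have := (finrank_terminal hc).2.2
    omega
  exact (finrank_opts h hne).1 t ht

end Values
section Witness

variable {V : Type*} {Γ : V → Finset V}

/-- mex of the value set of (finite-rank) options. -/
noncomputable def mexVS (Γ : V → Finset V) (x : V) : ℕ :=
  sInf {t | t ∉ ValSet Γ x}

lemma valSet_iff {x : V} {a : ℕ} :
    a ∈ ValSet Γ x ↔ ∃ y ∈ Γ x, FinRank Γ y ∧ gv Γ y = a := by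
  unfold ValSet
  constructor
  · rintro ⟨y, hy, hv⟩; exact ⟨y, hy, hasGVal_iff.mp hv⟩
  · rintro ⟨y, hy, h1, h2⟩; exact ⟨y, hy, hasGVal_iff.mpr ⟨h1, h2⟩⟩

lemma mexVS_spec (x : V) :
    mexVS Γ x ∉ ValSet Γ x ∧ ∀ t < mexVS Γ x, t ∈ ValSet Γ x := by
  have hne : {t | t ∉ ValSet Γ x}.Nonempty := by
    refine ⟨((Γ x).sup fun y => gv Γ y) + 1, fun hc => ?_⟩
    obtain ⟨y, hy, _, hv⟩ := valSet_iff.mp hc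
    have h2 : gv Γ y ≤ (Γ x).sup fun y => gv Γ y := Finset.le_sup (f := fun y => gv Γ y) hy
    omega
  refine ⟨Nat.sInf_mem hne, fun t ht => ?_⟩
  by_contra hc
  have : mexVS Γ x ≤ t := Nat.sInf_le hc
  omega

/-- Key witness: an infinite-rank position has an infinite-rank option `y` such
that no option of `y` has stable value `mexVS x`. -/
lemma inf_witness (hu : InfiniteRank Γ u) :
    ∃ y ∈ Γ u, InfiniteRank Γ y ∧ ∀ z ∈ Γ y, ¬ HasGVal Γ z (mexVS Γ u) := by
  classical
  have hm : mexVS Γ u = mexVS Γ u := rfl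
  -- a stage dominating all stabilization stages of options and options-of-options
  set N := (Γ u).sup (fun y => stg Γ y ⊔ (Γ y).sup (fun z => stg Γ z)) with hN
  have hNy : ∀ y ∈ Γ u, stg Γ y ≤ N := fun y hy =>
    le_trans (le_sup_left) (Finset.le_sup (f := fun y => stg Γ y ⊔ (Γ y).sup (fun z => stg Γ z)) hy)
  have hNz : ∀ y ∈ Γ u, ∀ z ∈ Γ y, stg Γ z ≤ N := fun y hy z hz =>
    le_trans (le_trans (Finset.le_sup (f := fun z => stg Γ z) hz) le_sup_right)
      (Finset.le_sup (f := fun y => stg Γ y ⊔ (Γ y).sup (fun z => stg Γ z)) hy)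
  -- at stage N, values of options are exactly the stable values
  have hstage : ∀ y ∈ Γ u, ∀ t : ℕ, Gfun Γ N y = (t : ℕ∞) ↔ (FinRank Γ y ∧ gv Γ y = t) := by
    intro y hy t
    constructor
    · intro h; exact ⟨(finrank_of_stage h).1, (finrank_of_stage h).2.2⟩
    · rintro ⟨hf, rfl⟩; exact gfun_val_at hf (hNy y hy)
  -- the mex at stage N is m
  have hmm : mexF (Γ u) (Gfun Γ N) = mexVS Γ u := by
    have hsets : {t : ℕ | ∀ y ∈ Γ u, Gfun Γ N y ≠ (t : ℕ∞)} = {t | t ∉ ValSet Γ u} := by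
      ext t
      simp only [Set.mem_setOf_eq]
      constructor
      · intro h hc
        obtain ⟨y, hy, hf, hv⟩ := valSet_iff.mp hc
        exact h y hy ((hstage y hy t).mpr ⟨hf, hv⟩)
      · intro h y hy hc
        exact h (valSet_iff.mpr ⟨y, hy, ((hstage y hy t).mp hc)⟩)
    unfold mexF mexVS
    rw [hsets]
  -- failure of the condition at stage N
  have htop : Gfun Γ (N+1) u = ⊤ := hu (N+1)
  rw [gfun_succ, hmm] at htop
  have hfail : ¬ ∀ y ∈ Γ u, Gfun Γ N y ≤ (mexVS Γ u : ℕ∞) ∨ ∃ z ∈ Γ y, Gfun Γ N z = (mexVS Γ u : ℕ∞) := by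
    intro hc
    rw [if_pos hc] at htop
    exact absurd htop (by simp)
  push_neg at hfail
  obtain ⟨y, hy, hy1, hy2⟩ := hfail
  refine ⟨y, hy, ?_, ?_⟩
  · -- y has infinite rank
    rw [infiniteRank_iff_not_finrank]
    intro hfy
    have hvy : Gfun Γ N y = (gv Γ y : ℕ∞) := gfun_val_at hfy (hNy y hy)
    have hblt : mexVS Γ u < gv Γ y := by
      rw [hvy] at hy1
      exact_mod_cast hy1
    obtain ⟨z, hz, hfz, hvz, _⟩ := finrank_opt_lt hfy hblt
    exact hy2 z hz (by rw [gfun_val_at hfz (hNz y hy z hz), hvz])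
  · intro z hz hc
    obtain ⟨hfz, hvz⟩ := hasGVal_iff.mp hc
    exact hy2 z hz (by rw [gfun_val_at hfz (hNz y hy z hz), hvz])

lemma infiniteRank_nonterminal (hu : InfiniteRank Γ u) : Γ u ≠ ∅ := by
  intro hc
  rw [infiniteRank_iff_not_finrank] at hu
  exact hu (finrank_terminal hc).1

end Witness
section Outcomes

variable {V : Type*} {Γ : V → Finset V}

lemma posP_zero_mem {x : V} : x ∈ PosP Γ 0 ↔ Γ x = ∅ := Iff.rfl

lemma posP_succ_mem {n : ℕ} {x : V} :
    x ∈ PosP Γ (n+1) ↔ ∀ y ∈ Γ x, ∃ z ∈ Γ y, z ∈ PosP Γ n := Iff.rfl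

lemma posN_succ_mem {n : ℕ} {x : V} :
    x ∈ PosN Γ (n+1) ↔ ∃ y ∈ Γ x, y ∈ PosP Γ n := Iff.rfl

lemma posP_mono : ∀ n, PosP Γ n ⊆ PosP Γ (n+1) := by
  intro n
  induction n with
  | zero =>
    intro x hx
    rw [posP_zero_mem] at hx
    rw [posP_succ_mem, hx]
    simp
  | succ n ih =>
    intro x hx
    rw [posP_succ_mem] at hx ⊢
    intro y hy
    obtain ⟨z, hz, hzp⟩ := hx y hy
    exact ⟨z, hz, ih hzp⟩

lemma posP_mono_le {n m : ℕ} (h : n ≤ m) : PosP Γ n ⊆ PosP Γ m := by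
  induction m with
  | zero => cases Nat.le_zero.mp h; exact subset_rfl
  | succ m ih =>
    rcases Nat.lt_or_ge n (m+1) with hlt | hge
    · exact (ih (Nat.lt_succ_iff.mp hlt)).trans (posP_mono m)
    · cases le_antisymm h hge; exact subset_rfl

lemma mem_PPos {x : V} : x ∈ PPos Γ ↔ ∃ n, x ∈ PosP Γ n := Set.mem_iUnion

lemma mem_NPos {x : V} : x ∈ NPos Γ ↔ ∃ y ∈ Γ x, y ∈ PPos Γ := by
  unfold NPos
  rw [Set.mem_iUnion]
  constructor
  · rintro ⟨n, hn⟩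
    cases n with
    | zero => exact absurd hn (by simp [PosN])
    | succ n =>
      obtain ⟨y, hy, hyp⟩ := posN_succ_mem.mp hn
      exact ⟨y, hy, mem_PPos.mpr ⟨n, hyp⟩⟩
  · rintro ⟨y, hy, hyp⟩
    obtain ⟨n, hn⟩ := mem_PPos.mp hyp
    exact ⟨n+1, posN_succ_mem.mpr ⟨y, hy, hn⟩⟩

lemma mem_DPos {x : V} : x ∈ DPos Γ ↔ x ∉ PPos Γ ∧ x ∉ NPos Γ := by
  unfold DPos
  rw [Set.mem_compl_iff, Set.mem_union]
  tauto

/-- P- and N-positions are disjoint. -/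
lemma posP_posN_disj : ∀ s n k (x : V), n + k = s → x ∈ PosP Γ n → x ∈ PosN Γ k → False := by
  intro s
  induction s using Nat.strong_induction_on with
  | _ s ih =>
    intro n k x hs hp hn
    cases k with
    | zero => exact absurd hn (by simp [PosN])
    | succ k =>
      obtain ⟨y, hy, hyp⟩ := posN_succ_mem.mp hn
      cases n with
      | zero =>
        rw [posP_zero_mem] at hp
        rw [hp] at hy
        exact absurd hy (Finset.notMem_empty y)
      | succ n =>
        obtain ⟨z, hz, hzp⟩ := posP_succ_mem.mp hp y hy
        have hyn : y ∈ PosN Γ (n+1) := posN_succ_mem.mpr ⟨z, hz, hzp⟩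
        exact ih (k + (n+1)) (by omega) k (n+1) y rfl hyp hyn

lemma PPos_NPos_disj {x : V} (hp : x ∈ PPos Γ) (hn : x ∈ NPos Γ) : False := by
  obtain ⟨n, hn1⟩ := mem_PPos.mp hp
  obtain ⟨k, hn2⟩ := Set.mem_iUnion.mp hn
  exact posP_posN_disj (n+k) n k x rfl hn1 hn2

lemma not_posP_of_NPos {x : V} (hn : x ∈ NPos Γ) (n : ℕ) : x ∉ PosP Γ n :=
  fun hp => PPos_NPos_disj (mem_PPos.mpr ⟨n, hp⟩) hn

lemma NPos_intro {x y : V} (hy : y ∈ Γ x) (hp : y ∈ PPos Γ) : x ∈ NPos Γ :=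
  mem_NPos.mpr ⟨y, hy, hp⟩

end Outcomes
section Sums

variable {V W : Type*} {Γ : V → Finset V} {Δ : W → Finset W}

lemma mem_sumGraph {q : V × W} {u : V} {v : W} :
    q ∈ sumGraph Γ Δ (u, v) ↔ (∃ u' ∈ Γ u, q = (u', v)) ∨ ∃ v' ∈ Δ v, q = (u, v') := by
  simp only [sumGraph, Finset.mem_union, Finset.mem_image]
  constructor
  · rintro (⟨u', h, rfl⟩ | ⟨v', h, rfl⟩)
    exacts [Or.inl ⟨u', h, rfl⟩, Or.inr ⟨v', h, rfl⟩]
  · rintro (⟨u', h, rfl⟩ | ⟨v', h, rfl⟩)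
    exacts [Or.inl ⟨u', h, rfl⟩, Or.inr ⟨v', h, rfl⟩]

lemma sumGraph_fst {u' : V} {u : V} {v : W} (h : u' ∈ Γ u) :
    (u', v) ∈ sumGraph Γ Δ (u, v) := mem_sumGraph.mpr (Or.inl ⟨u', h, rfl⟩)

lemma sumGraph_snd {v' : W} {u : V} {v : W} (h : v' ∈ Δ v) :
    (u, v') ∈ sumGraph Γ Δ (u, v) := mem_sumGraph.mpr (Or.inr ⟨v', h, rfl⟩)

lemma sumGraph_empty {u : V} {v : W} (h1 : Γ u = ∅) (h2 : Δ v = ∅) :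
    sumGraph Γ Δ (u, v) = ∅ := by
  simp [sumGraph, h1, h2]

/-- O1: equal finite Grundy values give a P-position of the sum. -/
lemma sum_posP_of_eq :
    ∀ s : ℕ, ∀ (u : V) (v : W), FinRank Γ u → FinRank Δ v → gv Γ u = gv Δ v →
      stg Γ u + stg Δ v ≤ s → (u, v) ∈ PosP (sumGraph Γ Δ) s := by
  intro s
  induction s using Nat.strong_induction_on with
  | _ s ih =>
    intro u v hu hv hg hs
    cases s with
    | zero =>
      have hu0 : stg Γ u = 0 := by omega
      have hv0 : stg Δ v = 0 := by omega
      rw [posP_zero_mem]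
      exact sumGraph_empty (terminal_of_stg_zero hu hu0) (terminal_of_stg_zero hv hv0)
    | succ s =>
      by_cases hterm : Γ u = ∅ ∧ Δ v = ∅
      · exact posP_mono_le (Nat.zero_le _) (posP_zero_mem.mpr (sumGraph_empty hterm.1 hterm.2))
      · rw [posP_succ_mem]
        intro q hq
        rcases mem_sumGraph.mp hq with ⟨u', hu', rfl⟩ | ⟨v', hv', rfl⟩
        · -- move in the first component
          have hune : Γ u ≠ ∅ := fun hc => by rw [hc] at hu'; exact absurd hu' (Finset.notMem_empty _)
          have h1u : 1 ≤ stg Γ u := stg_pos hu hune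
          rcases (finrank_opts hu hune).2.2 u' hu' with ⟨hf, hlt, hsle⟩ | ⟨z, hz, hf, hvz, hsle⟩
          · -- u' has smaller value: reply in the second component
            have hltv : gv Γ u' < gv Δ v := by omega
            obtain ⟨v', hv', hfv', hgv', hsv'⟩ := finrank_opt_lt hv hltv
            have h1v : 1 ≤ stg Δ v := stg_pos hv (fun hc => by
              rw [hc] at hv'; exact absurd hv' (Finset.notMem_empty _))
            refine ⟨(u', v'), sumGraph_snd hv', ?_⟩
            exact ih s (Nat.lt_succ_self s) u' v' hf hfv' (by omega) (by omega)
          · -- back-move in the first component to value gv u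
            refine ⟨(z, v), sumGraph_fst hz, ?_⟩
            exact ih s (Nat.lt_succ_self s) z v hf hv (by omega) (by omega)
        · -- move in the second component
          have hvne : Δ v ≠ ∅ := fun hc => by rw [hc] at hv'; exact absurd hv' (Finset.notMem_empty _)
          have h1v : 1 ≤ stg Δ v := stg_pos hv hvne
          rcases (finrank_opts hv hvne).2.2 v' hv' with ⟨hf, hlt, hsle⟩ | ⟨z, hz, hf, hvz, hsle⟩
          · have hltu : gv Δ v' < gv Γ u := by omega
            obtain ⟨u', hu', hfu', hgu', hsu'⟩ := finrank_opt_lt hu hltu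
            have h1u : 1 ≤ stg Γ u := stg_pos hu (fun hc => by
              rw [hc] at hu'; exact absurd hu' (Finset.notMem_empty _))
            refine ⟨(u', v'), sumGraph_fst hu', ?_⟩
            exact ih s (Nat.lt_succ_self s) u' v' hfu' hf (by omega) (by omega)
          · refine ⟨(u, z), sumGraph_snd hz, ?_⟩
            exact ih s (Nat.lt_succ_self s) u z hu hf (by omega) (by omega)

lemma sum_PPos_of_eq {u : V} {v : W} (hu : FinRank Γ u) (hv : FinRank Δ v)
    (hg : gv Γ u = gv Δ v) : (u, v) ∈ PPos (sumGraph Γ Δ) :=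
  mem_PPos.mpr ⟨stg Γ u + stg Δ v, sum_posP_of_eq _ u v hu hv hg le_rfl⟩

/-- O2: unequal finite Grundy values give an N-position of the sum. -/
lemma sum_NPos_of_ne {u : V} {v : W} (hu : FinRank Γ u) (hv : FinRank Δ v)
    (hg : gv Γ u ≠ gv Δ v) : (u, v) ∈ NPos (sumGraph Γ Δ) := by
  rcases Nat.lt_or_ge (gv Δ v) (gv Γ u) with hlt | hge
  · obtain ⟨u', hu', hf, hgu', _⟩ := finrank_opt_lt hu hlt
    exact NPos_intro (sumGraph_fst hu') (sum_PPos_of_eq hf hv (by omega))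
  · have hlt : gv Γ u < gv Δ v := by omega
    obtain ⟨v', hv', hf, hgv', _⟩ := finrank_opt_lt hv hlt
    exact NPos_intro (sumGraph_snd hv') (sum_PPos_of_eq hu hf (by omega))

lemma sum_not_PPos_of_ne {u : V} {v : W} (hu : FinRank Γ u) (hv : FinRank Δ v)
    (hg : gv Γ u ≠ gv Δ v) : (u, v) ∉ PPos (sumGraph Γ Δ) :=
  fun hp => PPos_NPos_disj hp (sum_NPos_of_ne hu hv hg)

end Sums
section InfSums

variable {V W : Type*} {Γ : V → Finset V} {Δ : W → Finset W}

lemma sumGraph_eq_empty_iff {u : V} {v : W} :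
    sumGraph Γ Δ (u, v) = ∅ ↔ Γ u = ∅ ∧ Δ v = ∅ := by
  simp [sumGraph, Finset.union_eq_empty, Finset.image_eq_empty]

lemma mexVS_lt_of_ne {u : V} {b : ℕ} (h1 : b ∉ ValSet Γ u) (h2 : b ≠ mexVS Γ u) :
    mexVS Γ u < b := by
  rcases Nat.lt_or_ge b (mexVS Γ u) with hlt | hge
  · exact absurd ((mexVS_spec u).2 b hlt) h1
  · omega

/-- INF: a sum with an infinite-rank component is in no `Pₙ`. -/
lemma sum_not_posP_of_inf :
    ∀ n : ℕ, ∀ (u : V) (v : W), (InfiniteRank Γ u ∨ InfiniteRank Δ v) →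
      (u, v) ∉ PosP (sumGraph Γ Δ) n := by
  intro n
  induction n using Nat.strong_induction_on with
  | _ n ih =>
    intro u v hinf hp
    cases n with
    | zero =>
      rw [posP_zero_mem, sumGraph_eq_empty_iff] at hp
      rcases hinf with h | h
      · exact infiniteRank_nonterminal h hp.1
      · exact infiniteRank_nonterminal h hp.2
    | succ n =>
      rcases hinf with hu | hv
      · -- first component has infinite rank
        by_cases hv2 : InfiniteRank Δ v
        · -- both infinite: any option of a witness is bad
          obtain ⟨y, hy, hyi, -⟩ := inf_witness hu
          obtain ⟨q, hq, hqp⟩ := posP_succ_mem.mp hp (y, v) (sumGraph_fst hy)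
          rcases mem_sumGraph.mp hq with ⟨z, hz, rfl⟩ | ⟨v'', hv'', rfl⟩
          · exact ih n (Nat.lt_succ_self n) z v (Or.inr hv2) hqp
          · exact ih n (Nat.lt_succ_self n) y v'' (Or.inl hyi) hqp
        · have hfv : FinRank Δ v := by rwa [infiniteRank_iff_not_finrank, not_not] at hv2
          by_cases hbA : gv Δ v ∈ ValSet Γ u
          · -- N-position: move the first component to value gv v
            obtain ⟨u0, hu0, hf0, hg0⟩ := valSet_iff.mp hbA
            exact not_posP_of_NPos
              (NPos_intro (sumGraph_fst hu0) (sum_PPos_of_eq hf0 hfv hg0)) (n+1) hp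
          · by_cases hbm : gv Δ v = mexVS Γ u
            · -- witness case
              obtain ⟨y, hy, hyi, hyz⟩ := inf_witness hu
              obtain ⟨q, hq, hqp⟩ := posP_succ_mem.mp hp (y, v) (sumGraph_fst hy)
              rcases mem_sumGraph.mp hq with ⟨z, hz, rfl⟩ | ⟨v'', hv'', rfl⟩
              · by_cases hzf : FinRank Γ z
                · have hne : gv Γ z ≠ gv Δ v := fun he =>
                    hyz z hz (hasGVal_iff.mpr ⟨hzf, by rw [he, hbm]⟩)
                  exact not_posP_of_NPos (sum_NPos_of_ne hzf hfv hne) n hqp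
                · exact ih n (Nat.lt_succ_self n) z v
                    (Or.inl (infiniteRank_iff_not_finrank.mpr hzf)) hqp
              · exact ih n (Nat.lt_succ_self n) y v'' (Or.inl hyi) hqp
            · -- move the second component to value mexVS u
              have hmb : mexVS Γ u < gv Δ v := mexVS_lt_of_ne hbA hbm
              obtain ⟨v', hv', hfv', hgv', -⟩ := finrank_opt_lt hfv hmb
              obtain ⟨q, hq, hqp⟩ := posP_succ_mem.mp hp (u, v') (sumGraph_snd hv')
              rcases mem_sumGraph.mp hq with ⟨u', hu', rfl⟩ | ⟨v'', hv'', rfl⟩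
              · by_cases huf : FinRank Γ u'
                · have hmem : gv Γ u' ∈ ValSet Γ u := valSet_iff.mpr ⟨u', hu', huf, rfl⟩
                  have hne : gv Γ u' ≠ gv Δ v' := fun he => by
                    rw [he, hgv'] at hmem; exact (mexVS_spec u).1 hmem
                  exact not_posP_of_NPos (sum_NPos_of_ne huf hfv' hne) n hqp
                · exact ih n (Nat.lt_succ_self n) u' v'
                    (Or.inl (infiniteRank_iff_not_finrank.mpr huf)) hqp
              · exact ih n (Nat.lt_succ_self n) u v'' (Or.inl hu) hqp
      · -- second component has infinite rank (mirror)
        by_cases hu2 : InfiniteRank Γ u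
        · obtain ⟨y, hy, hyi, -⟩ := inf_witness hv
          obtain ⟨q, hq, hqp⟩ := posP_succ_mem.mp hp (u, y) (sumGraph_snd hy)
          rcases mem_sumGraph.mp hq with ⟨u'', hu'', rfl⟩ | ⟨z, hz, rfl⟩
          · exact ih n (Nat.lt_succ_self n) u'' y (Or.inr hyi) hqp
          · exact ih n (Nat.lt_succ_self n) u z (Or.inl hu2) hqp
        · have hfu : FinRank Γ u := by rwa [infiniteRank_iff_not_finrank, not_not] at hu2
          by_cases hbA : gv Γ u ∈ ValSet Δ v
          · obtain ⟨v0, hv0, hf0, hg0⟩ := valSet_iff.mp hbA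
            exact not_posP_of_NPos
              (NPos_intro (sumGraph_snd hv0) (sum_PPos_of_eq hfu hf0 hg0.symm)) (n+1) hp
          · by_cases hbm : gv Γ u = mexVS Δ v
            · obtain ⟨y, hy, hyi, hyz⟩ := inf_witness hv
              obtain ⟨q, hq, hqp⟩ := posP_succ_mem.mp hp (u, y) (sumGraph_snd hy)
              rcases mem_sumGraph.mp hq with ⟨u'', hu'', rfl⟩ | ⟨z, hz, rfl⟩
              · exact ih n (Nat.lt_succ_self n) u'' y (Or.inr hyi) hqp
              · by_cases hzf : FinRank Δ z
                · have hne : gv Γ u ≠ gv Δ z := fun he =>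
                    hyz z hz (hasGVal_iff.mpr ⟨hzf, by rw [← he, hbm]⟩)
                  exact not_posP_of_NPos (sum_NPos_of_ne hfu hzf hne) n hqp
                · exact ih n (Nat.lt_succ_self n) u z
                    (Or.inr (infiniteRank_iff_not_finrank.mpr hzf)) hqp
            · have hmb : mexVS Δ v < gv Γ u := mexVS_lt_of_ne hbA hbm
              obtain ⟨u', hu', hfu', hgu', -⟩ := finrank_opt_lt hfu hmb
              obtain ⟨q, hq, hqp⟩ := posP_succ_mem.mp hp (u', v) (sumGraph_fst hu')
              rcases mem_sumGraph.mp hq with ⟨u'', hu'', rfl⟩ | ⟨v'', hv'', rfl⟩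
              · exact ih n (Nat.lt_succ_self n) u'' v (Or.inr hv) hqp
              · by_cases hvf : FinRank Δ v''
                · have hmem : gv Δ v'' ∈ ValSet Δ v := valSet_iff.mpr ⟨v'', hv'', hvf, rfl⟩
                  have hne : gv Γ u' ≠ gv Δ v'' := fun he => by
                    rw [← he, hgu'] at hmem; exact (mexVS_spec v).1 hmem
                  exact not_posP_of_NPos (sum_NPos_of_ne hfu' hvf hne) n hqp
                · exact ih n (Nat.lt_succ_self n) u' v''
                    (Or.inr (infiniteRank_iff_not_finrank.mpr hvf)) hqp

lemma sum_not_PPos_of_inf {u : V} {v : W}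
    (h : InfiniteRank Γ u ∨ InfiniteRank Δ v) : (u, v) ∉ PPos (sumGraph Γ Δ) := by
  intro hp
  obtain ⟨n, hn⟩ := mem_PPos.mp hp
  exact sum_not_posP_of_inf n u v h hn

end InfSums
section Tables

variable {V W : Type*} {Γ : V → Finset V} {Δ : W → Finset W}

lemma sum_PPos_iff_fin {u : V} {v : W} (hu : FinRank Γ u) (hv : FinRank Δ v) :
    (u, v) ∈ PPos (sumGraph Γ Δ) ↔ gv Γ u = gv Δ v := by
  constructor
  · intro hp
    by_contra hne
    exact sum_not_PPos_of_ne hu hv hne hp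
  · exact sum_PPos_of_eq hu hv

lemma sum_NPos_iff_fin {u : V} {v : W} (hu : FinRank Γ u) (hv : FinRank Δ v) :
    (u, v) ∈ NPos (sumGraph Γ Δ) ↔ gv Γ u ≠ gv Δ v := by
  constructor
  · intro hn he
    exact PPos_NPos_disj (sum_PPos_of_eq hu hv he) hn
  · exact sum_NPos_of_ne hu hv

lemma sum_NPos_iff_mixR {u : V} {v : W} (hu : InfiniteRank Γ u) (hv : FinRank Δ v) :
    (u, v) ∈ NPos (sumGraph Γ Δ) ↔ gv Δ v ∈ ValSet Γ u := by
  constructor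
  · intro hn
    obtain ⟨q, hq, hqp⟩ := mem_NPos.mp hn
    rcases mem_sumGraph.mp hq with ⟨u', hu', rfl⟩ | ⟨v', hv', rfl⟩
    · by_cases huf : FinRank Γ u'
      · have he : gv Γ u' = gv Δ v := by
          by_contra hne
          exact sum_not_PPos_of_ne huf hv hne hqp
        exact valSet_iff.mpr ⟨u', hu', huf, he⟩
      · exact absurd hqp (sum_not_PPos_of_inf
          (Or.inl (infiniteRank_iff_not_finrank.mpr huf)))
    · exact absurd hqp (sum_not_PPos_of_inf (Or.inl hu))
  · intro hmem
    obtain ⟨u0, hu0, hf0, hg0⟩ := valSet_iff.mp hmem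
    exact NPos_intro (sumGraph_fst hu0) (sum_PPos_of_eq hf0 hv hg0)

lemma sum_NPos_iff_mixL {u : V} {v : W} (hu : FinRank Γ u) (hv : InfiniteRank Δ v) :
    (u, v) ∈ NPos (sumGraph Γ Δ) ↔ gv Γ u ∈ ValSet Δ v := by
  constructor
  · intro hn
    obtain ⟨q, hq, hqp⟩ := mem_NPos.mp hn
    rcases mem_sumGraph.mp hq with ⟨u', hu', rfl⟩ | ⟨v', hv', rfl⟩
    · exact absurd hqp (sum_not_PPos_of_inf (Or.inr hv))
    · by_cases hvf : FinRank Δ v'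
      · have he : gv Γ u = gv Δ v' := by
          by_contra hne
          exact sum_not_PPos_of_ne hu hvf hne hqp
        exact valSet_iff.mpr ⟨v', hv', hvf, he.symm⟩
      · exact absurd hqp (sum_not_PPos_of_inf
          (Or.inr (infiniteRank_iff_not_finrank.mpr hvf)))
  · intro hmem
    obtain ⟨v0, hv0, hf0, hg0⟩ := valSet_iff.mp hmem
    exact NPos_intro (sumGraph_snd hv0) (sum_PPos_of_eq hu hf0 hg0.symm)

lemma sum_not_NPos_of_inf_inf {u : V} {v : W}
    (hu : InfiniteRank Γ u) (hv : InfiniteRank Δ v) :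
    (u, v) ∉ NPos (sumGraph Γ Δ) := by
  intro hn
  obtain ⟨q, hq, hqp⟩ := mem_NPos.mp hn
  rcases mem_sumGraph.mp hq with ⟨u', hu', rfl⟩ | ⟨v', hv', rfl⟩
  · exact sum_not_PPos_of_inf (Or.inr hv) hqp
  · exact sum_not_PPos_of_inf (Or.inl hu) hqp

end Tables

section Nim

lemma mexF_eq {V : Type*} {s : Finset V} {g : V → ℕ∞} {c : ℕ}
    (h1 : ∀ y ∈ s, g y ≠ (c : ℕ∞)) (h2 : ∀ t < c, ∃ y ∈ s, g y = (t : ℕ∞)) :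
    mexF s g = c := by
  have hle : mexF s g ≤ c := Nat.sInf_le h1
  rcases lt_or_eq_of_le hle with hlt | heq
  · obtain ⟨y, hy, hval⟩ := h2 _ hlt
    exact absurd hval (mexF_notMem s g hy)
  · exact heq

/-- The nim heap graph, lifted to an arbitrary universe. -/
def liftNim (m : ℕ) : ULift.{v} (Fin (m + 1)) → Finset (ULift.{v} (Fin (m + 1))) :=
  fun k => (nimGraph m k.down).image ULift.up

lemma mem_liftNim {m : ℕ} {j k : ULift.{v} (Fin (m + 1))} :
    j ∈ liftNim m k ↔ (j.down : ℕ) < (k.down : ℕ) := by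
  simp only [liftNim, nimGraph, Finset.mem_image, Finset.mem_filter, Finset.mem_univ, true_and]
  constructor
  · rintro ⟨a, ha, rfl⟩
    exact ha
  · intro h
    exact ⟨j.down, h, rfl⟩

lemma gfun_liftNim {m : ℕ} : ∀ n (k : ULift.{v} (Fin (m + 1))),
    Gfun (liftNim m) n k = if (k.down : ℕ) ≤ n then ((k.down : ℕ) : ℕ∞) else ⊤ := by
  intro n
  induction n with
  | zero =>
    intro k
    rw [gfun_zero]
    by_cases h0 : (k.down : ℕ) = 0
    · rw [if_pos, if_pos (by omega)]
      · simp [h0]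
      · rw [Finset.eq_empty_iff_forall_notMem]
        intro j hj
        rw [mem_liftNim] at hj
        omega
    · rw [if_neg, if_neg (by omega)]
      intro hc
      have : (ULift.up (0 : Fin (m+1)) : ULift.{v} (Fin (m+1))) ∈ liftNim m k := by
        rw [mem_liftNim]
        simp only [ULift.down_up, Fin.val_zero]
        omega
      rw [hc] at this
      exact Finset.notMem_empty _ this
  | succ n ih =>
    intro k
    by_cases hc : (k.down : ℕ) ≤ n + 1
    · have hmex : mexF (liftNim m k) (Gfun (liftNim m) n) = (k.down : ℕ) := by
        apply mexF_eq
        · intro j hj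
          rw [mem_liftNim] at hj
          rw [ih j]
          split_ifs with h
          · intro hcon
            have : (j.down : ℕ) = (k.down : ℕ) := by exact_mod_cast hcon
            omega
          · exact fun hcon => ENat.coe_ne_top _ hcon.symm
        · intro t ht
          have htm : t < m + 1 := by have := k.down.isLt; omega
          refine ⟨ULift.up ⟨t, htm⟩, ?_, ?_⟩
          · rw [mem_liftNim]; exact ht
          · rw [ih]
            simp only [ULift.down_up]
            rw [if_pos (show ((⟨t, htm⟩ : Fin (m+1)) : ℕ) ≤ n by simp only [Fin.val_mk]; omega)]
      rw [gfun_succ, hmex, if_pos, if_pos hc]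
      intro j hj
      rw [mem_liftNim] at hj
      left
      rw [ih j, if_pos (by omega)]
      exact_mod_cast Nat.le_of_lt hj
    · have hmex : mexF (liftNim m k) (Gfun (liftNim m) n) = n + 1 := by
        apply mexF_eq
        · intro j hj
          rw [mem_liftNim] at hj
          rw [ih j]
          split_ifs with h
          · intro hcon
            have : (j.down : ℕ) = n + 1 := by exact_mod_cast hcon
            omega
          · exact fun hcon => ENat.coe_ne_top _ hcon.symm
        · intro t ht
          have htm : t < m + 1 := by have := k.down.isLt; omega
          refine ⟨ULift.up ⟨t, htm⟩, ?_, ?_⟩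
          · rw [mem_liftNim]; simp only [ULift.down_up]; omega
          · rw [ih]
            simp only [ULift.down_up]
            rw [if_pos (show ((⟨t, htm⟩ : Fin (m+1)) : ℕ) ≤ n by simp only [Fin.val_mk]; omega)]
      rw [gfun_succ, hmex, if_neg, if_neg hc]
      intro hcon
      have hn1m : n + 1 < m + 1 := by have := k.down.isLt; omega
      have hmem : (ULift.up (⟨n+1, hn1m⟩ : Fin (m+1)) : ULift.{v} (Fin (m+1))) ∈ liftNim m k := by
        rw [mem_liftNim]; simp only [ULift.down_up]; omega
      rcases hcon _ hmem with h1 | ⟨z, hz, hz2⟩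
      · rw [ih, ULift.down_up, if_neg (by simp)] at h1
        exact absurd (top_le_iff.mp h1) (ENat.coe_ne_top _)
      · rw [mem_liftNim, ULift.down_up] at hz
        rw [ih z] at hz2
        split_ifs at hz2 with h
        · have : (z.down : ℕ) = n + 1 := by exact_mod_cast hz2
          omega
        · exact absurd hz2.symm (ENat.coe_ne_top _)

lemma liftNim_hasGVal (a : ℕ) :
    HasGVal (liftNim a) (ULift.up.{v} (Fin.last a)) a := by
  refine ⟨a, fun n hn => ?_⟩
  rw [gfun_liftNim n]
  simp only [ULift.down_up, Fin.val_last]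
  rw [if_pos hn]

end Nim
section Main

lemma sameOutcome_of_iff {V W : Type*} {Γ : V → Finset V} {Δ : W → Finset W} {x : V} {y : W}
    (h1 : x ∈ PPos Γ ↔ y ∈ PPos Δ) (h2 : x ∈ NPos Γ ↔ y ∈ NPos Δ) :
    SameOutcome Γ x Δ y :=
  ⟨h1, h2, by rw [mem_DPos, mem_DPos]; tauto⟩

theorem stmt6' {V W : Type*} (Γ : V → Finset V) (Δ : W → Finset W) (x : V) (y : W) :
    GameEquiv Γ x Δ y ↔
      ((∃ m : ℕ, HasGVal Γ x m ∧ HasGVal Δ y m) ∨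
        (InfiniteRank Γ x ∧ InfiniteRank Δ y ∧ ValSet Γ x = ValSet Δ y)) := by
  constructor
  · intro h
    by_cases hx : FinRank Γ x <;> by_cases hy : FinRank Δ y
    · -- both finite rank
      left
      refine ⟨gv Γ x, hasGVal_of_finrank hx, ?_⟩
      set z := ULift.up (Fin.last (gv Γ x)) with hzdef
      obtain ⟨hfz, hgz⟩ := hasGVal_iff.mp (liftNim_hasGVal (gv Γ x))
      have hxP : (x, z) ∈ PPos (sumGraph Γ (liftNim (gv Γ x))) :=
        sum_PPos_of_eq hx hfz (by rw [hgz])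
      have hyP := (h _ (liftNim (gv Γ x)) z).1.mp hxP
      have := (sum_PPos_iff_fin hy hfz).mp hyP
      exact hasGVal_iff.mpr ⟨hy, by rw [this, hgz]⟩
    · -- x finite, y infinite: impossible
      exfalso
      set z := ULift.up (Fin.last (gv Γ x)) with hzdef
      obtain ⟨hfz, hgz⟩ := hasGVal_iff.mp (liftNim_hasGVal (gv Γ x))
      have hxP : (x, z) ∈ PPos (sumGraph Γ (liftNim (gv Γ x))) :=
        sum_PPos_of_eq hx hfz (by rw [hgz])
      have hyP := (h _ (liftNim (gv Γ x)) z).1.mp hxP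
      exact sum_not_PPos_of_inf (Or.inl (infiniteRank_iff_not_finrank.mpr hy)) hyP
    · -- x infinite, y finite: impossible
      exfalso
      set z := ULift.up (Fin.last (gv Δ y)) with hzdef
      obtain ⟨hfz, hgz⟩ := hasGVal_iff.mp (liftNim_hasGVal (gv Δ y))
      have hyP : (y, z) ∈ PPos (sumGraph Δ (liftNim (gv Δ y))) :=
        sum_PPos_of_eq hy hfz (by rw [hgz])
      have hxP := (h _ (liftNim (gv Δ y)) z).1.mpr hyP
      exact sum_not_PPos_of_inf (Or.inl (infiniteRank_iff_not_finrank.mpr hx)) hxP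
    · -- both infinite rank
      right
      have hxi := infiniteRank_iff_not_finrank.mpr hx
      have hyi := infiniteRank_iff_not_finrank.mpr hy
      refine ⟨hxi, hyi, Set.ext fun a => ?_⟩
      set z := ULift.up (Fin.last a) with hzdef
      obtain ⟨hfz, hgz⟩ := hasGVal_iff.mp (liftNim_hasGVal a)
      have hN := (h _ (liftNim a) z).2.1
      rw [sum_NPos_iff_mixR hxi hfz, sum_NPos_iff_mixR hyi hfz, hgz] at hN
      exact hN
  · rintro (⟨m, hxm, hym⟩ | ⟨hxi, hyi, hVS⟩) <;> intro X Ξ z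
    · obtain ⟨hfx, hgx⟩ := hasGVal_iff.mp hxm
      obtain ⟨hfy, hgy⟩ := hasGVal_iff.mp hym
      by_cases hz : FinRank Ξ z
      · refine sameOutcome_of_iff ?_ ?_
        · rw [sum_PPos_iff_fin hfx hz, sum_PPos_iff_fin hfy hz, hgx, hgy]
        · rw [sum_NPos_iff_fin hfx hz, sum_NPos_iff_fin hfy hz, hgx, hgy]
      · have hzi := infiniteRank_iff_not_finrank.mpr hz
        refine sameOutcome_of_iff ?_ ?_
        · exact iff_of_false (sum_not_PPos_of_inf (Or.inr hzi))
            (sum_not_PPos_of_inf (Or.inr hzi))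
        · rw [sum_NPos_iff_mixL hfx hzi, sum_NPos_iff_mixL hfy hzi, hgx, hgy]
    · by_cases hz : FinRank Ξ z
      · refine sameOutcome_of_iff ?_ ?_
        · exact iff_of_false (sum_not_PPos_of_inf (Or.inl hxi))
            (sum_not_PPos_of_inf (Or.inl hyi))
        · rw [sum_NPos_iff_mixR hxi hz, sum_NPos_iff_mixR hyi hz, hVS]
      · have hzi := infiniteRank_iff_not_finrank.mpr hz
        refine sameOutcome_of_iff ?_ ?_
        · exact iff_of_false (sum_not_PPos_of_inf (Or.inl hxi))
            (sum_not_PPos_of_inf (Or.inl hyi))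
        · exact iff_of_false (sum_not_NPos_of_inf_inf hxi hzi)
            (sum_not_NPos_of_inf_inf hyi hzi)

end Main

/-- two locally finite games are equivalent iff they have the same
extended Sprague-Grundy value: either both of finite rank with the same value
`m ∈ ℕ`, or both of infinite rank with the same set `𝒜`. -/
theorem stmt6 {V W : Type*} (Γ : V → Finset V) (Δ : W → Finset W) (x : V) (y : W) :
    GameEquiv Γ x Δ y ↔
      ((∃ m : ℕ, HasGVal Γ x m ∧ HasGVal Δ y m) ∨
        (InfiniteRank Γ x ∧ InfiniteRank Δ y ∧ ValSet Γ x = ValSet Δ y)) :=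
  stmt6' Γ Δ x y
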